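/- Suppose p in R<x,x*> has the form p = (s + q) f, where s is a nonzero sum of squares, q* = -q, f is nonzero, and deg(s + q) > 0. Then the left ideal I generated by p is not real; indeed, f* p + p* f = 2 f* s f is a nonzero sum of squares lying in I + I*, while deg(f) < deg(p). -/

import Mathlib

open scoped BigOperators

noncomputable section

/-- The free real *-algebra on `g` variables `x₁,…,x_g` and their formal adjoints
`x₁*,…,x_g*`, modeled as the monoid algebra of the free monoid on `2g` letters,
where `Sum.inl i` is `xᵢ` and `Sum.inr i` is `xᵢ*`. -/
abbrev FreeStarAlg (g : ℕ) := MonoidAlgebra ℝ (FreeMonoid (Fin g ⊕ Fin g))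

namespace FreeStarAlg

variable {g : ℕ}

/-- The involution on words: reverse the word and star each letter. -/
def starWord (w : FreeMonoid (Fin g ⊕ Fin g)) : FreeMonoid (Fin g ⊕ Fin g) :=
  FreeMonoid.ofList (((FreeMonoid.toList w).map Sum.swap).reverse)

/-- The involution `p ↦ p*` on the free *-algebra. -/
def starP (p : FreeStarAlg g) : FreeStarAlg g :=
  MonoidAlgebra.ofCoeff (Finsupp.mapDomain starWord p.coeff)

/-- The monomial corresponding to a word. -/
def mono (w : FreeMonoid (Fin g ⊕ Fin g)) : FreeStarAlg g :=
  MonoidAlgebra.single w 1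

/-- Degree of a noncommutative polynomial. -/
def deg (p : FreeStarAlg g) : ℕ :=
  p.coeff.support.sup fun w => (FreeMonoid.toList w).length

/-- `p` is homogeneous of degree `d`: every word appearing in `p` has length `d`. -/
def IsHom (d : ℕ) (p : FreeStarAlg g) : Prop :=
  ∀ w ∈ p.coeff.support, (FreeMonoid.toList w).length = d

/-- `p` is a (finite) sum of hermitian squares `qᵢ* qᵢ`. -/
def IsSOS (p : FreeStarAlg g) : Prop :=
  ∃ (k : ℕ) (q : Fin k → FreeStarAlg g), p = ∑ i, starP (q i) * q i

/-- Membership in `I + I*`. -/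
def MemIplusIstar (I : Submodule (FreeStarAlg g) (FreeStarAlg g)) (p : FreeStarAlg g) : Prop :=
  ∃ u ∈ I, ∃ v ∈ I, p = u + starP v

/-- A left ideal `I` is real if `∑ aᵢ* aᵢ ∈ I + I*` forces every `aᵢ ∈ I`. -/
def IsRealIdeal (I : Submodule (FreeStarAlg g) (FreeStarAlg g)) : Prop :=
  ∀ (r : ℕ) (a : Fin r → FreeStarAlg g),
    MemIplusIstar I (∑ i, starP (a i) * a i) → ∀ i, a i ∈ I

/-- The left ideal generated by a set `S`. -/
def leftIdealGen (S : Set (FreeStarAlg g)) : Submodule (FreeStarAlg g) (FreeStarAlg g) :=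
  Submodule.span (FreeStarAlg g) S

/-- `p` is irreducible: it cannot be written as a product of two polynomials of
strictly smaller degree. -/
def Irred (p : FreeStarAlg g) : Prop :=
  ¬ ∃ q r : FreeStarAlg g, p = q * r ∧ deg q < deg p ∧ deg r < deg p

/-- `p` is analytic: it contains no starred variables. -/
def IsAnalytic (p : FreeStarAlg g) : Prop :=
  ∀ w ∈ p.coeff.support, ∀ l ∈ FreeMonoid.toList w, l.isLeft

-- starWord lemmas
lemma starWord_mul (u v : FreeMonoid (Fin g ⊕ Fin g)) :
    starWord (u * v) = starWord v * starWord u := by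
  simp [starWord, FreeMonoid.toList_mul]

lemma starWord_starWord (w : FreeMonoid (Fin g ⊕ Fin g)) : starWord (starWord w) = w := by
  simp [starWord, List.map_reverse, List.map_map, Sum.swap_swap_eq]

lemma starWord_invol : Function.Involutive (starWord (g := g)) := starWord_starWord

lemma len_starWord (w : FreeMonoid (Fin g ⊕ Fin g)) :
    (FreeMonoid.toList (starWord w)).length = (FreeMonoid.toList w).length := by
  simp [starWord]

-- starP lemmas
lemma starP_add (a b : FreeStarAlg g) : starP (a + b) = starP a + starP b := by
  simp only [starP, MonoidAlgebra.coeff_add, Finsupp.mapDomain_add, MonoidAlgebra.ofCoeff_add]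

lemma starP_smul (r : ℝ) (a : FreeStarAlg g) : starP (r • a) = r • starP a :=
  by simp only [starP, MonoidAlgebra.coeff_smul, Finsupp.mapDomain_smul, MonoidAlgebra.ofCoeff_smul]

lemma starP_neg (a : FreeStarAlg g) : starP (-a) = - starP a := by
  have := starP_smul (-1) a; simpa using this

lemma starP_single (w : FreeMonoid (Fin g ⊕ Fin g)) (r : ℝ) :
    starP (MonoidAlgebra.single w r) = MonoidAlgebra.single (starWord w) r := by
  simp only [starP, MonoidAlgebra.coeff_single, Finsupp.mapDomain_single, MonoidAlgebra.ofCoeff_single]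

lemma starP_starP (a : FreeStarAlg g) : starP (starP a) = a := by
  rw [starP, starP, MonoidAlgebra.coeff_ofCoeff, ← Finsupp.mapDomain_comp]
  simp only [Function.comp_def, starWord_starWord]
  exact congrArg MonoidAlgebra.ofCoeff Finsupp.mapDomain_id

lemma starWord_inj : Function.Injective (starWord (g := g)) :=
  starWord_invol.injective

lemma toList_inj : Function.Injective (FreeMonoid.toList (α := Fin g ⊕ Fin g)) :=
  FreeMonoid.toList.injective

lemma starP_inj : Function.Injective (starP (g := g)) :=
  Function.Involutive.injective starP_starP

lemma starP_mul (a b : FreeStarAlg g) : starP (a * b) = starP b * starP a := by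
  induction a using MonoidAlgebra.induction_linear with
  | zero => simp [starP]
  | add x y hx hy => rw [add_mul, starP_add, hx, hy, starP_add, mul_add]
  | single w r =>
    induction b using MonoidAlgebra.induction_linear with
    | zero => simp [starP]
    | add x y hx hy => rw [mul_add, starP_add, hx, hy, starP_add, add_mul]
    | single w' r' =>
      rw [MonoidAlgebra.single_mul_single, starP_single, starP_single, starP_single,
        MonoidAlgebra.single_mul_single, starWord_mul, mul_comm r r']

lemma starP_sum {ι : Type*} (t : Finset ι) (a : ι → FreeStarAlg g) :
    starP (∑ i ∈ t, a i) = ∑ i ∈ t, starP (a i) := by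
  classical
  induction t using Finset.induction with
  | empty => simp [starP]
  | insert _ _ h ih => simp [Finset.sum_insert h, starP_add, ih]


-- deg lemmas
lemma len_le_deg {p : FreeStarAlg g} {w} (hw : w ∈ p.coeff.support) :
    (FreeMonoid.toList w).length ≤ deg p := Finset.le_sup hw

lemma deg_zero : deg (0 : FreeStarAlg g) = 0 := by simp [deg]

lemma exists_word_deg {p : FreeStarAlg g} (hp : p ≠ 0) :
    ∃ w ∈ p.coeff.support, (FreeMonoid.toList w).length = deg p := by
  obtain ⟨w, hw, h⟩ := Finset.exists_mem_eq_sup p.coeff.support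
    (Finsupp.support_nonempty_iff.mpr (by simpa using hp)) (fun w => (FreeMonoid.toList w).length)
  exact ⟨w, hw, h.symm⟩

lemma deg_starP (p : FreeStarAlg g) : deg (starP p) = deg p := by
  classical
  classical
  rw [deg, starP, MonoidAlgebra.coeff_ofCoeff, Finsupp.mapDomain_support_of_injective starWord_inj, Finset.sup_image]
  exact Finset.sup_congr rfl fun w _ => len_starWord w

lemma deg_add_le (a b : FreeStarAlg g) : deg (a + b) ≤ max (deg a) (deg b) := by
  classical
  apply Finset.sup_le
  intro w hw
  rcases Finset.mem_union.mp (Finsupp.support_add hw) with h | h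
  · exact le_max_of_le_left (len_le_deg h)
  · exact le_max_of_le_right (len_le_deg h)

lemma deg_smul_le (r : ℝ) (a : FreeStarAlg g) : deg (r • a) ≤ deg a := by
  apply Finset.sup_le
  intro w hw
  exact len_le_deg (Finsupp.support_smul hw)

-- key coefficient lemma
lemma coeff_mul_top {a b : FreeStarAlg g} {u v : FreeMonoid (Fin g ⊕ Fin g)}
    (hu : u ∈ a.coeff.support) (hul : (FreeMonoid.toList u).length = deg a)
    (hv : v ∈ b.coeff.support) (hvl : (FreeMonoid.toList v).length = deg b) :
    (a * b).coeff (u * v) = a.coeff u * b.coeff v := by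
  classical
  have key : ∀ y ∈ a.coeff.support, ∀ z ∈ b.coeff.support, y * z = u * v → y = u ∧ z = v := by
    intro y hy z hz hyz
    have hly : (FreeMonoid.toList y).length ≤ (FreeMonoid.toList u).length := by
      rw [hul]; exact len_le_deg hy
    have hlz : (FreeMonoid.toList z).length ≤ (FreeMonoid.toList v).length := by
      rw [hvl]; exact len_le_deg hz
    have hlen : (FreeMonoid.toList y).length + (FreeMonoid.toList z).length
        = (FreeMonoid.toList u).length + (FreeMonoid.toList v).length := by
      have := congrArg (fun w => (FreeMonoid.toList w).length) hyz
      simpa [FreeMonoid.toList_mul] using this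
    have hy' : (FreeMonoid.toList y).length = (FreeMonoid.toList u).length := by omega
    have happ : FreeMonoid.toList y ++ FreeMonoid.toList z
        = FreeMonoid.toList u ++ FreeMonoid.toList v := by
      have := congrArg FreeMonoid.toList hyz
      simpa [FreeMonoid.toList_mul] using this
    obtain ⟨h1, h2⟩ := List.append_inj happ hy'
    exact ⟨toList_inj h1, toList_inj h2⟩
  rw [MonoidAlgebra.mul_apply]
  simp only [Finsupp.sum]
  rw [Finset.sum_eq_single_of_mem u hu]
  · rw [Finset.sum_eq_single_of_mem v hv]
    · simp
    · intro z hz hzv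
      rw [if_neg]
      intro h
      exact hzv (key u hu z hz h).2
  · intro y hy hyu
    apply Finset.sum_eq_zero
    intro z hz
    rw [if_neg]
    intro h
    exact hyu (key y hy z hz h).1

lemma deg_mul {a b : FreeStarAlg g} (ha : a ≠ 0) (hb : b ≠ 0) :
    deg (a * b) = deg a + deg b := by
  classical
  obtain ⟨u, hu, hul⟩ := exists_word_deg ha
  obtain ⟨v, hv, hvl⟩ := exists_word_deg hb
  apply le_antisymm
  · apply Finset.sup_le
    intro w hw
    obtain ⟨y, hy, z, hz, rfl⟩ := Finset.mem_mul.mp (MonoidAlgebra.support_coeff_mul_subset a b hw)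
    simp only [FreeMonoid.toList_mul, List.length_append]
    exact add_le_add (len_le_deg hy) (len_le_deg hz)
  · have hco : (a * b).coeff (u * v) = a.coeff u * b.coeff v := coeff_mul_top hu hul hv hvl
    have hne : (a * b).coeff (u * v) ≠ 0 := by
      rw [hco]
      exact mul_ne_zero (Finsupp.mem_support_iff.mp hu) (Finsupp.mem_support_iff.mp hv)
    have : u * v ∈ (a * b).coeff.support := Finsupp.mem_support_iff.mpr hne
    calc deg a + deg b = (FreeMonoid.toList (u * v)).length := by
          simp [FreeMonoid.toList_mul, hul, hvl]
      _ ≤ deg (a * b) := len_le_deg this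

lemma starP_zero : starP (0 : FreeStarAlg g) = 0 := by simp [starP]

lemma deg_smul {r : ℝ} (hr : r ≠ 0) (a : FreeStarAlg g) : deg (r • a) = deg a := by
  rw [deg, deg, MonoidAlgebra.coeff_smul, Finsupp.support_smul_eq hr]

lemma two_mul_eq_smul (x : FreeStarAlg g) : (2 : FreeStarAlg g) * x = (2 : ℝ) • x := by
  rw [two_mul, two_smul]

lemma sos_herm {s : FreeStarAlg g} (hs : IsSOS s) : starP s = s := by
  obtain ⟨k, e, rfl⟩ := hs
  rw [starP_sum]
  refine Finset.sum_congr rfl fun i _ => ?_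
  rw [starP_mul, starP_starP]

lemma conj_sum (f : FreeStarAlg g) {k : ℕ} (e : Fin k → FreeStarAlg g) :
    starP f * (∑ i, starP (e i) * e i) * f = ∑ i, starP (e i * f) * (e i * f) := by
  rw [Finset.mul_sum, Finset.sum_mul]
  refine Finset.sum_congr rfl fun i _ => ?_
  rw [starP_mul]
  noncomm_ring

end FreeStarAlg

open FreeStarAlg

/-- If `p = (s + q) f` with `s` a nonzero sum of squares, `q* = -q`,
`f ≠ 0` and `deg (s + q) > 0`, then the left ideal generated by `p` is not real;
indeed `f* p + p* f = 2 f* s f` is a nonzero sum of squares in `I + I*`, and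
`deg f < deg p`. -/
theorem stmt11 {g : ℕ} (s q f p : FreeStarAlg g)
    (hs : IsSOS s) (hs0 : s ≠ 0) (hq : starP q = -q) (hf : f ≠ 0)
    (hdeg : 0 < deg (s + q)) (hp : p = (s + q) * f) :
    ¬ IsRealIdeal (leftIdealGen {p}) ∧
      starP f * p + starP p * f = 2 * (starP f * s * f) ∧
      IsSOS (starP f * p + starP p * f) ∧
      starP f * p + starP p * f ≠ 0 ∧
      MemIplusIstar (leftIdealGen {p}) (starP f * p + starP p * f) ∧
      deg f < deg p := by
  classical
  obtain ⟨k, e, he⟩ := hs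
  have hsq : s + q ≠ 0 := by
    intro h0
    rw [h0, deg_zero] at hdeg
    exact lt_irrefl 0 hdeg
  have hsherm : starP s = s := sos_herm ⟨k, e, he⟩
  have hstar_sq : starP (s + q) = s - q := by
    rw [starP_add, hq, hsherm, sub_eq_add_neg]
  have hps : starP p = starP f * (s - q) := by
    rw [hp, starP_mul, hstar_sq]
  have hsf : starP f ≠ 0 := fun h => hf (starP_inj (h.trans starP_zero.symm))
  have key : starP f * p + starP p * f = 2 * (starP f * s * f) := by
    rw [hps, hp]
    noncomm_ring
  -- the SOS witnesses
  set a : Fin k → FreeStarAlg g := fun i => Real.sqrt 2 • (e i * f) with ha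
  have sqrt2_ne : Real.sqrt 2 ≠ 0 := by positivity
  have hsum : ∑ i, starP (a i) * a i = starP f * p + starP p * f := by
    rw [key, two_mul_eq_smul, he, conj_sum f e, Finset.smul_sum]
    refine Finset.sum_congr rfl fun i _ => ?_
    simp only [ha, starP_smul]
    rw [smul_mul_assoc, mul_smul_comm, smul_smul,
      Real.mul_self_sqrt (by norm_num : (0:ℝ) ≤ 2)]
  set I := leftIdealGen (g := g) {p} with hI
  have hmemI : starP f * p ∈ I :=
    Submodule.mem_span_singleton.mpr ⟨starP f, by rw [smul_eq_mul]⟩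
  have hmem : MemIplusIstar I (starP f * p + starP p * f) := by
    refine ⟨starP f * p, hmemI, starP f * p, hmemI, ?_⟩
    rw [starP_mul, starP_starP]
  have hdegsle : deg s ≤ deg (s + q) := by
    have h2s : (2 : ℝ) • s = (s + q) + starP (s + q) := by
      rw [hstar_sq, two_smul]
      abel
    calc deg s = deg ((2 : ℝ) • s) := (deg_smul (by norm_num) s).symm
      _ = deg ((s + q) + starP (s + q)) := by rw [h2s]
      _ ≤ max (deg (s + q)) (deg (starP (s + q))) := deg_add_le _ _
      _ = deg (s + q) := by rw [deg_starP, max_self]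
  refine ⟨?_, key, ⟨k, a, hsum.symm⟩, ?_, hmem, ?_⟩
  · -- not a real ideal
    intro hreal
    have hai : ∀ i, a i ∈ I := hreal k a (by rw [hsum]; exact hmem)
    have hef : ∀ i, e i * f ∈ I := by
      intro i
      have h2 : ((Real.sqrt 2)⁻¹ : ℝ) • a i ∈ I := by
        rw [← algebraMap_smul (FreeStarAlg g)]
        exact I.smul_mem _ (hai i)
      simp only [ha] at h2
      simpa [smul_smul, inv_mul_cancel₀ sqrt2_ne] using h2
    have hec : ∀ i, ∃ c : FreeStarAlg g, e i = c * (s + q) := by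
      intro i
      obtain ⟨c, hc⟩ := Submodule.mem_span_singleton.mp (hef i)
      rw [smul_eq_mul, hp, ← mul_assoc] at hc
      exact ⟨c, (mul_right_cancel₀ hf hc).symm⟩
    choose c hc using hec
    set C : FreeStarAlg g := ∑ i, starP (c i) * c i with hC
    have hsC : s = starP (s + q) * C * (s + q) := by
      refine he.trans ?_
      rw [hC, Finset.mul_sum, Finset.sum_mul]
      refine Finset.sum_congr rfl fun i _ => ?_
      rw [hc i, starP_mul]
      noncomm_ring
    have hCne : C ≠ 0 := by
      intro h0
      rw [h0, mul_zero, zero_mul] at hsC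
      exact hs0 hsC
    have hstarne : starP (s + q) ≠ 0 :=
      fun h => hsq (starP_inj (h.trans starP_zero.symm))
    have hdegs : deg s = deg (s + q) + deg C + deg (s + q) := by
      conv_lhs => rw [hsC]
      rw [deg_mul (mul_ne_zero hstarne hCne) hsq, deg_mul hstarne hCne, deg_starP]
    omega
  · -- nonzero
    rw [key, two_mul_eq_smul]
    exact smul_ne_zero (by norm_num) (mul_ne_zero (mul_ne_zero hsf hs0) hf)
  · -- degree
    rw [hp, deg_mul hsq hf]
    omega
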